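/- arXiv:2302.09356 — 10 statements merged into one kernel-verified Lean document; each statement's English description precedes it below -/
import Mathlib

section
/- For every integer j with 0 ≤ j ≤ α₄ − 1 one has jα₂ + α₄ < α₁ + jα₂₁ + j. (In particular the monomial X₂^{jα₂}X₃X₄^{α₄−(j+1)} has strictly smaller total degree than X₁^{α₁+jα₂₁}, so it is the leading monomial of f_{1,j} for a local degree ordering.) -/
set_option maxHeartbeats 1000000


/-- For every `j` with `0 ≤ j ≤ α₄ − 1` one has
`j*α₂ + α₄ < α₁ + j*α₂₁ + j`. -/
theorem leading_monomial_f1j (α₁ α₂ α₃ α₄ α₂₁ : ℕ)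
    (h1 : 2 ≤ α₁) (h2 : 2 ≤ α₂) (h3 : 2 ≤ α₃) (h4 : 2 ≤ α₄)
    (h21 : 1 ≤ α₂₁) (h21' : α₂₁ ≤ α₁ - 2)
    (hn12 : α₂ * α₃ * (α₄ - 1) + 1 <
      α₂₁ * α₃ * α₄ + (α₁ - α₂₁ - 1) * (α₃ - 1) + α₃)
    (h31 : α₃ < α₁ - α₂₁)
    (h221 : α₂₁ + 1 < α₂) :
    ∀ j : ℕ, j ≤ α₄ - 1 → j * α₂ + α₄ < α₁ + j * α₂₁ + j := by
  intro j hj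
  -- A ≥ t+2 from h31
  obtain ⟨c, hc⟩ : ∃ c, α₂ = α₂₁ + 2 + c := ⟨α₂ - α₂₁ - 2, by omega⟩
  obtain ⟨A, hA⟩ : ∃ A, α₁ = α₂₁ + 1 + A := ⟨α₁ - α₂₁ - 1, by omega⟩
  obtain ⟨t, ht⟩ : ∃ t, α₃ = 2 + t := ⟨α₃ - 2, by omega⟩
  obtain ⟨s, hs⟩ : ∃ s, α₄ = 2 + s := ⟨α₄ - 2, by omega⟩
  have hAt : t + 2 ≤ A := by omega
  have hj' : j ≤ s + 1 := by omega
  subst hc hA ht hs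
  rw [show 2 + s - 1 = 1 + s from by omega,
      show α₂₁ + 1 + A - α₂₁ - 1 = A from by omega,
      show 2 + t - 1 = 1 + t from by omega] at hn12
  have hK : (c + 2) * (t + 2) * (s + 1) + 1 <
      α₂₁ * (t + 2) + A * (t + 1) + t + 2 := by nlinarith [hn12]
  -- reduce the goal
  have hjb : j * (c + 1) ≤ (s + 1) * (c + 1) := Nat.mul_le_mul_right _ hj'
  suffices h : (s + 1) * (c + 2) + 1 ≤ A + α₂₁ by nlinarith [h, hjb]
  rcases le_or_gt ((s + 1) * (c + 2)) (α₂₁ + 1) with hcase | hcase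
  · omega
  · obtain ⟨D, hD⟩ : ∃ D, (s + 1) * (c + 2) = α₂₁ + 2 + D := ⟨(s + 1) * (c + 2) - α₂₁ - 2, by omega⟩
    have hDm : (s + 1) * (c + 2) * (t + 2) = (α₂₁ + 2 + D) * (t + 2) := by rw [hD]
    have hK2 : (t + 2) * (D + 1) + 2 ≤ A * (t + 1) := by nlinarith [hK, hDm]
    have hfin : D + 3 ≤ A := by
      rcases le_or_gt (D + 1) t with hDt | hDt
      · omega
      · have hDt' : t ≤ D := by omega
        nlinarith [hK2, hDt']
    omega
end

section
/- If n₁ < n₂ and α₁ > α₃ + α₂₁, then (α₂ − α₂₁)(α₄ − 1) + 1 < α₁. -/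
/-- If `n₁ < n₂` and `α₁ > α₃ + α₂₁`, then
`(α₂ − α₂₁)(α₄ − 1) + 1 < α₁`. -/
theorem basic_inequality (α₁ α₂ α₃ α₄ α₂₁ : ℕ)
    (h1 : 2 ≤ α₁) (h2 : 2 ≤ α₂) (h3 : 2 ≤ α₃) (h4 : 2 ≤ α₄)
    (h21 : 1 ≤ α₂₁) (h21' : α₂₁ ≤ α₁ - 2)
    (hn12 : α₂ * α₃ * (α₄ - 1) + 1 <
      α₂₁ * α₃ * α₄ + (α₁ - α₂₁ - 1) * (α₃ - 1) + α₃)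
    (h31 : α₃ + α₂₁ < α₁) :
    ((α₂ : ℤ) - (α₂₁ : ℤ)) * ((α₄ : ℤ) - 1) + 1 < (α₁ : ℤ) := by
  have hs1 : 1 ≤ α₄ := by omega
  have hs2 : 1 ≤ α₃ := by omega
  have hs4 : 1 ≤ α₁ - α₂₁ := by omega
  have hs3 : α₂₁ ≤ α₁ := by omega
  zify [hs1, hs2, hs3, hs4] at hn12
  have he : (α₂₁ : ℤ) + (α₃ : ℤ) < (α₁ : ℤ) := by exact_mod_cast (by omega : α₂₁ + α₃ < α₁)
  have hc : (2 : ℤ) ≤ (α₃ : ℤ) := by exact_mod_cast h3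
  have key : (α₃ : ℤ) * (((α₂ : ℤ) - (α₂₁ : ℤ)) * ((α₄ : ℤ) - 1)) <
      (α₃ : ℤ) * ((α₁ : ℤ) - 1) := by nlinarith
  have := lt_of_mul_lt_mul_left key (by positivity : (0:ℤ) ≤ (α₃ : ℤ))
  linarith
end

section
/- For every integer j with 0 ≤ j ≤ α₄ − 1 there exists a natural number s satisfying ((α₄−1)s+j)α₂ + α₄ − j < sα₁ + ((α₄−1)s+j+1)α₂₁ + α₃ − s; consequently, for each such j there is a smallest natural number s_j satisfying this inequality. -/
/-- The defining inequality of the parameter `s_j`. -/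
def SJIneq (α₁ α₂ α₃ α₄ α₂₁ j s : ℕ) : Prop :=
  ((α₄ - 1) * s + j) * α₂ + (α₄ - j) <
    s * α₁ + ((α₄ - 1) * s + j + 1) * α₂₁ + α₃ - s

lemma keyZ (a b c d e : ℤ) (hc : 2 ≤ c)
    (hn : b * c * (d - 1) + 1 < e * c * d + (a - e - 1) * (c - 1) + c)
    (h31 : c < a - e) :
    (d - 1) * (b - e) + 2 ≤ a := by
  nlinarith [mul_pos (show (0:ℤ) < c - 1 by linarith) (show (0:ℤ) < a - e - c by linarith)]

/-- for every `j ≤ α₄ − 1` there exists `s` satisfying the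
inequality, and consequently there is a smallest such `s_j`. -/
theorem sj_exists (α₁ α₂ α₃ α₄ α₂₁ : ℕ)
    (h1 : 2 ≤ α₁) (h2 : 2 ≤ α₂) (h3 : 2 ≤ α₃) (h4 : 2 ≤ α₄)
    (h21 : 1 ≤ α₂₁) (h21' : α₂₁ ≤ α₁ - 2)
    (hn12 : α₂ * α₃ * (α₄ - 1) + 1 <
      α₂₁ * α₃ * α₄ + (α₁ - α₂₁ - 1) * (α₃ - 1) + α₃)
    (h31 : α₃ < α₁ - α₂₁)
    (h221 : α₂₁ + 1 < α₂) :
    ∀ j : ℕ, j ≤ α₄ - 1 →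
      (∃ s : ℕ, SJIneq α₁ α₂ α₃ α₄ α₂₁ j s) ∧
      (∃ s : ℕ, IsLeast {m : ℕ | SJIneq α₁ α₂ α₃ α₄ α₂₁ j m} s) := by
  intro j hj
  have hea : α₂₁ + 2 ≤ α₁ := by omega
  have hn' : (α₂:ℤ) * α₃ * ((α₄:ℤ) - 1) + 1 <
      (α₂₁:ℤ) * α₃ * α₄ + ((α₁:ℤ) - α₂₁ - 1) * ((α₃:ℤ) - 1) + α₃ := by
    zify [(by omega : 1 ≤ α₄), (by omega : 1 ≤ α₃), (by omega : α₂₁ ≤ α₁),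
      (by omega : 1 ≤ α₁ - α₂₁)] at hn12
    convert hn12 using 2 <;> push_cast <;> ring
  have h31' : (α₃:ℤ) < (α₁:ℤ) - α₂₁ := by
    zify [(by omega : α₂₁ ≤ α₁)] at h31; exact h31
  have key : ((α₄:ℤ) - 1) * ((α₂:ℤ) - α₂₁) + 2 ≤ α₁ :=
    keyZ α₁ α₂ α₃ α₄ α₂₁ (by exact_mod_cast h3) hn' h31'
  have hex : ∃ s : ℕ, SJIneq α₁ α₂ α₃ α₄ α₂₁ j s := by
    refine ⟨j * α₂ + α₄, ?_⟩
    unfold SJIneq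
    set s := j * α₂ + α₄ with hs
    have hsub : s ≤ s * α₁ + ((α₄ - 1) * s + j + 1) * α₂₁ + α₃ :=
      (Nat.le_mul_of_pos_right s (by omega : 0 < α₁)).trans
        ((Nat.le_add_right _ _).trans (Nat.le_add_right _ _))
    have hj4 : j ≤ α₄ := by omega
    zify [hsub, hj4, (by omega : 1 ≤ α₄)]
    have hsZ : (s:ℤ) = (j:ℤ) * α₂ + α₄ := by exact_mod_cast congrArg Nat.cast hs
    have hj' : (j:ℤ) ≤ (α₄:ℤ) - 1 := by
      have : (j:ℤ) ≤ ((α₄ - 1 : ℕ) : ℤ) := by exact_mod_cast hj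
      omega
    nlinarith [mul_le_mul_of_nonneg_right key (show (0:ℤ) ≤ (s:ℤ) by positivity),
      mul_nonneg (show (0:ℤ) ≤ (j:ℤ) by positivity) (show (0:ℤ) ≤ (α₂₁:ℤ) by positivity),
      mul_nonneg (show (0:ℤ) ≤ (j:ℤ) by positivity) (show (0:ℤ) ≤ (α₂:ℤ) - α₂₁ - 1 by
        have : (α₂₁:ℤ) + 1 < α₂ := by exact_mod_cast h221
        linarith)]
  refine ⟨hex, ?_⟩
  classical
  exact ⟨Nat.find hex, Nat.find_spec hex, fun m hm => Nat.find_min' hex hm⟩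
end

section
/- For every integer j with 0 ≤ j ≤ α₄ − 1 one has the identity (α₁ + jα₂₁)·n₁ = jα₂·n₂ + n₃ + (α₄−1−j)·n₄. (Equivalently, the binomial f_{1,j} = X₁^{α₁+jα₂₁} − X₂^{jα₂}X₃X₄^{α₄−(j+1)} lies in the toric ideal I_S, i.e., in the kernel of the ring homomorphism K[X₁,X₂,X₃,X₄] → K[t] sending Xᵢ ↦ t^{nᵢ}.) -/
/-- the binomials `f_{1,j}` lie in the toric ideal, i.e.
`(α₁ + j·α₂₁)·n₁ = j·α₂·n₂ + n₃ + (α₄−1−j)·n₄` for all `0 ≤ j ≤ α₄ − 1`. -/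
theorem f1j_in_ideal (α₁ α₂ α₃ α₄ α₂₁ : ℕ)
    (h1 : 2 ≤ α₁) (h2 : 2 ≤ α₂) (h3 : 2 ≤ α₃) (h4 : 2 ≤ α₄)
    (h21 : 1 ≤ α₂₁) (h21' : α₂₁ ≤ α₁ - 2) :
    ∀ j : ℕ, j ≤ α₄ - 1 →
      (α₁ + j * α₂₁) * (α₂ * α₃ * (α₄ - 1) + 1) =
        j * α₂ * (α₂₁ * α₃ * α₄ + (α₁ - α₂₁ - 1) * (α₃ - 1) + α₃)
        + (α₁ * α₄ + (α₁ - α₂₁ - 1) * (α₂ - 1) * (α₄ - 1) + 1 - α₄)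
        + (α₄ - 1 - j) * (α₁ * α₂ * (α₃ - 1) + α₂₁ * (α₂ - 1) + α₂) := by
  intro j hj
  obtain ⟨a, ha⟩ : ∃ a, α₁ = α₂₁ + 1 + a := ⟨α₁ - α₂₁ - 1, by omega⟩
  obtain ⟨b, hb⟩ : ∃ b, α₂ = b + 1 := ⟨α₂ - 1, by omega⟩
  obtain ⟨c, hc⟩ : ∃ c, α₃ = c + 1 := ⟨α₃ - 1, by omega⟩
  obtain ⟨d, hd⟩ : ∃ d, α₄ = j + d + 1 := ⟨α₄ - 1 - j, by omega⟩
  subst ha hb hc hd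
  simp only [Nat.add_sub_cancel]
  have e1 : α₂₁ + 1 + a - α₂₁ - 1 = a := by omega
  have e2 : j + d + 1 - 1 = j + d := by omega
  have e3 : j + d - j = d := by omega
  rw [e1, e3]
  have e4 : (α₂₁ + 1 + a) * (j + d + 1) + a * b * (j + d) + 1 - (j + d + 1)
      = (α₂₁ + a) * (j + d + 1) + a * b * (j + d) + 1 := by rw [show (α₂₁ + 1 + a) * (j + d + 1) = (α₂₁ + a) * (j + d + 1) + (j + d + 1) by ring]; omega
  rw [e4]
  ring
end

section
/- For all integers j, i with 0 ≤ j ≤ α₄ − 1 and 0 ≤ i ≤ α₃ − 1 one has the identity (((α₄−1)i+j)α₂+1)·n₂ + (α₄−1−j)·n₄ = (iα₁ + ((α₄−1)i+j+1)α₂₁ + 1)·n₁ + (α₃−1−i)·n₃. (Equivalently, the binomial g_{j,i} = X₂^{((α₄−1)i+j)α₂+1}X₄^{α₄−(j+1)} − X₁^{iα₁+((α₄−1)i+j+1)α₂₁+1}X₃^{α₃−(i+1)} lies in the toric ideal I_S, i.e., in the kernel of the ring homomorphism K[X₁,X₂,X₃,X₄] → K[t] sending Xᵢ ↦ t^{nᵢ}.)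 -/
/-- the binomials `g_{j,i}` lie in the toric ideal, i.e.
`(((α₄−1)i+j)α₂+1)·n₂ + (α₄−1−j)·n₄ = (iα₁+((α₄−1)i+j+1)α₂₁+1)·n₁ + (α₃−1−i)·n₃`
for all `0 ≤ j ≤ α₄ − 1` and `0 ≤ i ≤ α₃ − 1`. -/
theorem gji_in_ideal (α₁ α₂ α₃ α₄ α₂₁ : ℕ)
    (h1 : 2 ≤ α₁) (h2 : 2 ≤ α₂) (h3 : 2 ≤ α₃) (h4 : 2 ≤ α₄)
    (h21 : 1 ≤ α₂₁) (h21' : α₂₁ ≤ α₁ - 2) :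
    ∀ j i : ℕ, j ≤ α₄ - 1 → i ≤ α₃ - 1 →
      (((α₄ - 1) * i + j) * α₂ + 1) *
          (α₂₁ * α₃ * α₄ + (α₁ - α₂₁ - 1) * (α₃ - 1) + α₃)
        + (α₄ - 1 - j) * (α₁ * α₂ * (α₃ - 1) + α₂₁ * (α₂ - 1) + α₂) =
      (i * α₁ + ((α₄ - 1) * i + j + 1) * α₂₁ + 1) * (α₂ * α₃ * (α₄ - 1) + 1)
        + (α₃ - 1 - i) *
            (α₁ * α₄ + (α₁ - α₂₁ - 1) * (α₂ - 1) * (α₄ - 1) + 1 - α₄) := by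
  intro j i hj hi
  have hm : 1 * α₄ ≤ α₁ * α₄ := Nat.mul_le_mul_right _ (by omega)
  have hsub : α₄ ≤ α₁ * α₄ + (α₁ - α₂₁ - 1) * (α₂ - 1) * (α₄ - 1) + 1 := by omega
  zify [hsub, show α₂₁ ≤ α₁ from by omega, show 1 ≤ α₁ - α₂₁ from by omega,
    show 1 ≤ α₂ from by omega, show 1 ≤ α₃ from by omega, show 1 ≤ α₄ from by omega,
    show j ≤ α₄ - 1 from hj, show i ≤ α₃ - 1 from hi, hj, hi]
  ring
end

section
/- Let R₁(t) = (∑_{j=0}^{α₃+α₂₁−1} t^j)·(∑_{j=0}^{(α₄−1)α₂−α₄} t^{j+α₄−1}) and R₂(t) = t^{(α₄−2)α₂+2}·(∑_{j=0}^{α₂₁−1} t^j)·(∑_{j=0}^{α₂+α₃−3} t^j). Then R₁(t) − R₂(t) = t^{α₄−1}·(∑_{j=0}^{α₃+α₂₁−1} t^j)·(∑_{j=0}^{(α₄−2)(α₂−1)} t^j) + t^{(α₄−2)α₂+α₂₁+2}·(∑_{j=0}^{α₃−1} t^j)·(∑_{j=0}^{α₂−α₂₁−3} t^j). -/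
open Polynomial Finset

/-- the identity `R₁(t) − R₂(t) = …` of polynomials in `ℤ[t]`.
Sums `∑_{j=0}^{N} t^j` are rendered as sums over `Finset.range (N+1)`, with
the count written so that it is `0` exactly when `N < 0` (empty sum). -/
theorem remark_R1_R2 (α₁ α₂ α₃ α₄ α₂₁ : ℕ)
    (h21 : 1 ≤ α₂₁) (h2 : α₂₁ + 2 ≤ α₂) (h3 : 2 ≤ α₃) (h4 : 2 ≤ α₄) :
    (∑ j ∈ range (α₃ + α₂₁), (X : Polynomial ℤ) ^ j) *
        (∑ j ∈ range ((α₄ - 1) * α₂ + 1 - α₄),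
          (X : Polynomial ℤ) ^ (j + (α₄ - 1)))
      - (X : Polynomial ℤ) ^ ((α₄ - 2) * α₂ + 2) *
          (∑ j ∈ range α₂₁, (X : Polynomial ℤ) ^ j) *
          (∑ j ∈ range (α₂ + α₃ - 2), (X : Polynomial ℤ) ^ j)
    = (X : Polynomial ℤ) ^ (α₄ - 1) *
          (∑ j ∈ range (α₃ + α₂₁), (X : Polynomial ℤ) ^ j) *
          (∑ j ∈ range ((α₄ - 2) * (α₂ - 1) + 1), (X : Polynomial ℤ) ^ j)
      + (X : Polynomial ℤ) ^ ((α₄ - 2) * α₂ + α₂₁ + 2) *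
          (∑ j ∈ range α₃, (X : Polynomial ℤ) ^ j) *
          (∑ j ∈ range (α₂ - α₂₁ - 2), (X : Polynomial ℤ) ^ j) := by
  obtain ⟨a, rfl⟩ : ∃ a, α₄ = a + 2 := ⟨α₄ - 2, by omega⟩
  obtain ⟨e, rfl⟩ : ∃ e, α₃ = e + 2 := ⟨α₃ - 2, by omega⟩
  obtain ⟨c, rfl⟩ : ∃ c, α₂ = α₂₁ + c + 2 := ⟨α₂ - α₂₁ - 2, by omega⟩
  set m := α₂₁ with hm
  have r1 : a + 2 - 1 = a + 1 := rfl
  have r2 : a + 2 - 2 = a := rfl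
  have r3 : m + c + 2 - 1 = m + c + 1 := rfl
  have e1 : (a + 2 - 1) * (m + c + 2) + 1 - (a + 2) = (a + 1) * (m + c + 1) := by
    rw [r1]
    have h : (a + 1) * (m + c + 2) = (a + 1) * (m + c + 1) + (a + 1) := by ring
    omega
  have e2 : m + c + 2 + (e + 2) - 2 = m + c + e + 2 := by omega
  have e3 : (a + 2 - 2) * (m + c + 2) + 2 = a * (m + c + 2) + 2 := by rw [r2]
  have e4 : (a + 2 - 2) * (m + c + 2 - 1) + 1 = a * (m + c + 1) + 1 := by rw [r2, r3]
  have e5 : m + c + 2 - m - 2 = c := by omega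
  have e7 : (a + 2 - 2) * (m + c + 2) + m + 2 = a * (m + c + 2) + m + 2 := by rw [r2]
  rw [e1, e2, e3, e4, e5, r1, e7]
  have hshift : (∑ j ∈ range ((a + 1) * (m + c + 1)), (X : Polynomial ℤ) ^ (j + (a + 1)))
      = (∑ j ∈ range ((a + 1) * (m + c + 1)), (X : Polynomial ℤ) ^ j) * X ^ (a + 1) := by
    rw [Finset.sum_mul]
    exact Finset.sum_congr rfl fun j _ => (pow_add X j (a + 1))
  rw [hshift]
  have hX : ((X : Polynomial ℤ) - 1) ≠ 0 := fun h => by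
    simpa using congrArg (Polynomial.eval 2) h
  apply mul_left_cancel₀ (pow_ne_zero 2 hX)
  have gs : ∀ n : ℕ, ((X : Polynomial ℤ) - 1) * ∑ j ∈ range n, (X : Polynomial ℤ) ^ j
      = X ^ n - 1 := fun n => by rw [mul_comm]; exact geom_sum_mul X n
  calc ((X : Polynomial ℤ) - 1) ^ 2 *
      ((∑ j ∈ range (e + 2 + m), (X : Polynomial ℤ) ^ j) *
        ((∑ j ∈ range ((a + 1) * (m + c + 1)), (X : Polynomial ℤ) ^ j) * X ^ (a + 1))
      - (X : Polynomial ℤ) ^ (a * (m + c + 2) + 2) *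
          (∑ j ∈ range m, (X : Polynomial ℤ) ^ j) *
          (∑ j ∈ range (m + c + e + 2), (X : Polynomial ℤ) ^ j))
      = (((X : Polynomial ℤ) - 1) * ∑ j ∈ range (e + 2 + m), (X : Polynomial ℤ) ^ j) *
          ((((X : Polynomial ℤ) - 1) * ∑ j ∈ range ((a + 1) * (m + c + 1)), (X : Polynomial ℤ) ^ j)) * X ^ (a + 1)
        - (X : Polynomial ℤ) ^ (a * (m + c + 2) + 2) *
          (((X : Polynomial ℤ) - 1) * ∑ j ∈ range m, (X : Polynomial ℤ) ^ j) *
          (((X : Polynomial ℤ) - 1) * ∑ j ∈ range (m + c + e + 2), (X : Polynomial ℤ) ^ j) := by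
        ring
    _ = ((X : Polynomial ℤ) ^ (e + 2 + m) - 1) * ((X : Polynomial ℤ) ^ ((a + 1) * (m + c + 1)) - 1) * X ^ (a + 1)
        - (X : Polynomial ℤ) ^ (a * (m + c + 2) + 2) * ((X : Polynomial ℤ) ^ m - 1) *
          ((X : Polynomial ℤ) ^ (m + c + e + 2) - 1) := by
        rw [gs, gs, gs, gs]
    _ = X ^ (a + 1) * ((X : Polynomial ℤ) ^ (e + 2 + m) - 1) *
          ((X : Polynomial ℤ) ^ (a * (m + c + 1) + 1) - 1)
        + (X : Polynomial ℤ) ^ (a * (m + c + 2) + m + 2) * ((X : Polynomial ℤ) ^ (e + 2) - 1) *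
          ((X : Polynomial ℤ) ^ c - 1) := by
        ring
    _ = (X : Polynomial ℤ) ^ (a + 1) *
          (((X : Polynomial ℤ) - 1) * ∑ j ∈ range (e + 2 + m), (X : Polynomial ℤ) ^ j) *
          (((X : Polynomial ℤ) - 1) * ∑ j ∈ range (a * (m + c + 1) + 1), (X : Polynomial ℤ) ^ j)
        + (X : Polynomial ℤ) ^ (a * (m + c + 2) + m + 2) *
          (((X : Polynomial ℤ) - 1) * ∑ j ∈ range (e + 2), (X : Polynomial ℤ) ^ j) *
          (((X : Polynomial ℤ) - 1) * ∑ j ∈ range c, (X : Polynomial ℤ) ^ j) := by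
        rw [gs, gs, gs, gs]
    _ = ((X : Polynomial ℤ) - 1) ^ 2 *
        ((X : Polynomial ℤ) ^ (a + 1) *
          (∑ j ∈ range (e + 2 + m), (X : Polynomial ℤ) ^ j) *
          (∑ j ∈ range (a * (m + c + 1) + 1), (X : Polynomial ℤ) ^ j)
        + (X : Polynomial ℤ) ^ (a * (m + c + 2) + m + 2) *
          (∑ j ∈ range (e + 2), (X : Polynomial ℤ) ^ j) *
          (∑ j ∈ range c, (X : Polynomial ℤ) ^ j)) := by
        ring
end

section
/- Let S₁(t) = t^{α₄−1}·(∑_{j=0}^{α₃+α₂₁−1} t^j)·(∑_{j=0}^{(α₄−2)(α₂−1)} t^j) and S₂(t) = (∑_{j=0}^{α₂₁−1} t^j)·(∑_{j=0}^{α₃−2} t^j)·(∑_{j=1}^{α₄−2} t^{jα₂+α₄−j}). Then S₁(t) − S₂(t) = t^{α₄−1}·(∑_{j=0}^{α₃+α₂₁−1} t^j)·(∑_{j=0}^{α₂−1} t^j) + t^{α₄+α₂+α₃−2}·(∑_{j=0}^{α₂₁} t^j)·(∑_{j=0}^{(α₄−3)(α₂−1)−1} t^j) + t^{α₄+α₂−1+α₂₁}·(∑_{j=0}^{α₂−α₂₁−2}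 t^j)·(∑_{j=0}^{α₃−2} t^j)·(∑_{j=0}^{α₄−3} t^{j(α₂−1)}) − t^{(α₄−2)α₂+2}·(∑_{j=0}^{α₃−2} t^j)·(∑_{j=0}^{α₂−2} t^j). -/
open Polynomial Finset

set_option maxHeartbeats 4000000 in
set_option synthInstance.maxHeartbeats 1000000 in
/-- the identity `S₁(t) − S₂(t) = …` of polynomials in `ℤ[t]`.
Sums `∑_{j=0}^{N} t^j` are rendered as sums over `Finset.range (N+1)`, with
the count written so that it is `0` exactly when `N < 0` (empty sum). -/
theorem remark_S1_S2 (α₁ α₂ α₃ α₄ α₂₁ : ℕ)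
    (h21 : 1 ≤ α₂₁) (h2 : α₂₁ + 2 ≤ α₂) (h3 : 2 ≤ α₃) (h4 : 3 ≤ α₄) :
    (X : Polynomial ℤ) ^ (α₄ - 1) *
        (∑ j ∈ range (α₃ + α₂₁), (X : Polynomial ℤ) ^ j) *
        (∑ j ∈ range ((α₄ - 2) * (α₂ - 1) + 1), (X : Polynomial ℤ) ^ j)
      - (∑ j ∈ range α₂₁, (X : Polynomial ℤ) ^ j) *
          (∑ j ∈ range (α₃ - 1), (X : Polynomial ℤ) ^ j) *
          (∑ j ∈ Icc 1 (α₄ - 2), (X : Polynomial ℤ) ^ (j * α₂ + (α₄ - j)))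
    = (X : Polynomial ℤ) ^ (α₄ - 1) *
          (∑ j ∈ range (α₃ + α₂₁), (X : Polynomial ℤ) ^ j) *
          (∑ j ∈ range α₂, (X : Polynomial ℤ) ^ j)
      + (X : Polynomial ℤ) ^ (α₄ + α₂ + α₃ - 2) *
          (∑ j ∈ range (α₂₁ + 1), (X : Polynomial ℤ) ^ j) *
          (∑ j ∈ range ((α₄ - 3) * (α₂ - 1)), (X : Polynomial ℤ) ^ j)
      + (X : Polynomial ℤ) ^ (α₄ + α₂ - 1 + α₂₁) *
          (∑ j ∈ range (α₂ - α₂₁ - 1), (X : Polynomial ℤ) ^ j) *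
          (∑ j ∈ range (α₃ - 1), (X : Polynomial ℤ) ^ j) *
          (∑ j ∈ range (α₄ - 2), (X : Polynomial ℤ) ^ (j * (α₂ - 1)))
      - (X : Polynomial ℤ) ^ ((α₄ - 2) * α₂ + 2) *
          (∑ j ∈ range (α₃ - 1), (X : Polynomial ℤ) ^ j) *
          (∑ j ∈ range (α₂ - 1), (X : Polynomial ℤ) ^ j) := by
  obtain ⟨d, rfl⟩ := Nat.exists_eq_add_of_le h4
  obtain ⟨c, rfl⟩ := Nat.exists_eq_add_of_le h3
  obtain ⟨b, rfl⟩ := Nat.exists_eq_add_of_le h2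
  obtain ⟨a, rfl⟩ := Nat.exists_eq_add_of_le h21
  simp only [show 1+a+2+b = a+b+3 from by omega,
    show 3+d-1 = d+2 from by omega,
    show 3+d-2 = d+1 from by omega,
    show 3+d-3 = d from by omega,
    show 2+c-1 = c+1 from by omega,
    show a+b+3-1 = a+b+2 from by omega,
    show a+b+3-(1+a)-1 = b+1 from by omega,
    show 3+d+(a+b+3)+(2+c)-2 = a+b+c+d+6 from by omega,
    show 3+d+(a+b+3)-1 = a+b+d+5 from by omega,
    show 2+c+(1+a) = a+c+3 from by omega,
    show 1+a+1 = a+2 from by omega]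
  have hIcc : (∑ j ∈ Icc 1 (d+1), (X : Polynomial ℤ) ^ (j*(a+b+3)+(3+d-j)))
      = (X : Polynomial ℤ) ^ (a+b+d+5) * ∑ j ∈ range (d+1), ((X : Polynomial ℤ)^(a+b+2))^j := by
    rw [Finset.mul_sum, ← Finset.Ico_add_one_right_eq_Icc, Finset.sum_Ico_eq_sum_range]
    apply Finset.sum_congr (by norm_num)
    intro i hi
    rw [← pow_mul, ← pow_add]
    congr 1
    have hi' : i ≤ d := by
      have := Finset.mem_range.mp hi; omega
    have h1 : i*(a+b+3) = (a+b+2)*i + i := by ring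
    have h2 : (1+i)*(a+b+3) = a+b+3 + i*(a+b+3) := by ring
    omega
  have hQ : (∑ j ∈ range (d+1), (X : Polynomial ℤ) ^ (j*(a+b+2)))
      = ∑ j ∈ range (d+1), ((X : Polynomial ℤ)^(a+b+2))^j :=
    Finset.sum_congr rfl fun i _ => by rw [mul_comm, pow_mul]
  rw [hIcc, hQ]
  have hXone : (X : Polynomial ℤ) ≠ 1 := by simpa using Polynomial.X_ne_C (1:ℤ)
  have hX1 : (X : Polynomial ℤ) - 1 ≠ 0 := sub_ne_zero.mpr hXone
  have hY : (X : Polynomial ℤ) ^ (a+b+2) - 1 ≠ 0 := by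
    intro h
    have h' := congrArg (Polynomial.eval 0) h
    simp at h'
  apply mul_right_cancel₀ (b := (((X : Polynomial ℤ) - 1) * ((X : Polynomial ℤ) - 1)) *
      ((X : Polynomial ℤ) ^ (a+b+2) - 1)) (mul_ne_zero (mul_ne_zero hX1 hX1) hY)
  trans ((X : Polynomial ℤ) ^ (d+2) *
        ((∑ j ∈ range (a+c+3), (X : Polynomial ℤ) ^ j) * (X - 1)) *
        ((∑ j ∈ range ((d+1)*(a+b+2)+1), (X : Polynomial ℤ) ^ j) * (X - 1)) *
        ((X : Polynomial ℤ) ^ (a+b+2) - 1)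
      - (X : Polynomial ℤ) ^ (a+b+d+5) *
        ((∑ j ∈ range (1+a), (X : Polynomial ℤ) ^ j) * (X - 1)) *
        ((∑ j ∈ range (c+1), (X : Polynomial ℤ) ^ j) * (X - 1)) *
        ((∑ j ∈ range (d+1), ((X : Polynomial ℤ) ^ (a+b+2)) ^ j) * ((X : Polynomial ℤ) ^ (a+b+2) - 1)))
  · ring
  trans ((X : Polynomial ℤ) ^ (d+2) *
        ((∑ j ∈ range (a+c+3), (X : Polynomial ℤ) ^ j) * (X - 1)) *
        ((∑ j ∈ range (a+b+3), (X : Polynomial ℤ) ^ j) * (X - 1)) *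
        ((X : Polynomial ℤ) ^ (a+b+2) - 1)
      + (X : Polynomial ℤ) ^ (a+b+c+d+6) *
        ((∑ j ∈ range (a+2), (X : Polynomial ℤ) ^ j) * (X - 1)) *
        ((∑ j ∈ range (d*(a+b+2)), (X : Polynomial ℤ) ^ j) * (X - 1)) *
        ((X : Polynomial ℤ) ^ (a+b+2) - 1)
      + (X : Polynomial ℤ) ^ (a+b+d+5+(1+a)) *
        ((∑ j ∈ range (b+1), (X : Polynomial ℤ) ^ j) * (X - 1)) *
        ((∑ j ∈ range (c+1), (X : Polynomial ℤ) ^ j) * (X - 1)) *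
        ((∑ j ∈ range (d+1), ((X : Polynomial ℤ) ^ (a+b+2)) ^ j) * ((X : Polynomial ℤ) ^ (a+b+2) - 1))
      - (X : Polynomial ℤ) ^ ((d+1)*(a+b+3)+2) *
        ((∑ j ∈ range (c+1), (X : Polynomial ℤ) ^ j) * (X - 1)) *
        ((∑ j ∈ range (a+b+2), (X : Polynomial ℤ) ^ j) * (X - 1)) *
        ((X : Polynomial ℤ) ^ (a+b+2) - 1))
  swap
  · ring
  simp only [geom_sum_mul]
  ring
end

section
/- Let Z(t) = (∑_{m=0}^{(α₄−1)α₂−1} t^m)·(∑_{i=1}^{α₄−1} ∑_{j=s_{i−1}}^{s_i−1} t^{jα₁+((α₄−1)j+(i+1))α₂₁+α₃−j}). If (α₄−1)α₂ < α₁ + (α₄−1)α₂₁, then every coefficient of Z(t) is at most 1. (The reason is that the exponents jα₁+((α₄−1)j+(i+1))α₂₁+α₃−j of consecutive terms in the double sum differ by α₁+(α₄−1)α₂₁−1 for fixed i, and by α₁+α₄α₂₁−1 when i increases, and both of these exceed (α₄−1)α₂ − 1.) -/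
open Polynomial Finset

/-- if `(α₄−1)α₂ < α₁ + (α₄−1)α₂₁`, then every coefficient of
`Z(t) = (∑_{m=0}^{(α₄−1)α₂−1} t^m)·(∑_{i=1}^{α₄−1} ∑_{j=s_{i−1}}^{s_i−1}
t^{jα₁+((α₄−1)j+(i+1))α₂₁+α₃−j})` is at most `1`. -/
theorem Z_coeff_le_one (α₁ α₂ α₃ α₄ α₂₁ : ℕ)
    (h1 : 2 ≤ α₁) (h2 : 2 ≤ α₂) (h3 : 2 ≤ α₃) (h4 : 2 ≤ α₄) (h21 : 1 ≤ α₂₁)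
    (s : ℕ → ℕ) (hs : ∀ i : ℕ, i + 1 ≤ α₄ - 1 → s i ≤ s (i + 1))
    (hlt : (α₄ - 1) * α₂ < α₁ + (α₄ - 1) * α₂₁) :
    ∀ n : ℕ,
      ((∑ m ∈ range ((α₄ - 1) * α₂), (X : Polynomial ℤ) ^ m) *
        (∑ i ∈ Icc 1 (α₄ - 1), ∑ j ∈ Ico (s (i - 1)) (s i),
          (X : Polynomial ℤ) ^
            (j * α₁ + ((α₄ - 1) * j + (i + 1)) * α₂₁ + α₃ - j))).coeff n ≤ 1 := by
  intro n
  set L := (α₄ - 1) * α₂ with hL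
  -- the untruncated exponent
  set e : ℕ → ℕ → ℕ := fun i j => j * (α₁ - 1) + ((α₄ - 1) * j + (i + 1)) * α₂₁ + α₃
    with he
  have hexp : ∀ i j : ℕ, j * α₁ + ((α₄ - 1) * j + (i + 1)) * α₂₁ + α₃ - j = e i j := by
    intro i j
    have h : j * α₁ = j * (α₁ - 1) + j * 1 := by
      rw [← Nat.mul_add]; congr 1; omega
    simp only [he]; omega
  -- monotonicity of s
  have smono : ∀ a b : ℕ, a ≤ b → b ≤ α₄ - 1 → s a ≤ s b := by
    intro a b hab hb
    induction b with
    | zero => exact Nat.le_zero.mp hab ▸ le_refl _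
    | succ k ih =>
      rcases Nat.eq_or_lt_of_le hab with h | h
      · exact h ▸ le_refl _
      · exact le_trans (ih (by omega) (by omega)) (hs k hb)
  -- gap lemma
  have gap : ∀ i i' j j' : ℕ, i ≤ i' → j + 1 ≤ j' → e i j + L ≤ e i' j' := by
    intro i i' j j' hi hj
    have hLle : L ≤ (α₁ - 1) + (α₄ - 1) * α₂₁ := by omega
    have h1' : (j + 1) * (α₁ - 1) ≤ j' * (α₁ - 1) := Nat.mul_le_mul_right _ hj
    have h2' : ((α₄ - 1) * (j + 1) + (i + 1)) * α₂₁
        ≤ ((α₄ - 1) * j' + (i' + 1)) * α₂₁ := by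
      apply Nat.mul_le_mul_right
      have := Nat.mul_le_mul_left (α₄ - 1) hj
      omega
    simp only [he]
    have e1 : (j + 1) * (α₁ - 1) = j * (α₁ - 1) + (α₁ - 1) := by ring
    have e2 : (α₄ - 1) * (j + 1) = (α₄ - 1) * j + (α₄ - 1) := by ring
    have e3 : ((α₄ - 1) * j + (α₄ - 1) + (i + 1)) * α₂₁
        = ((α₄ - 1) * j + (i + 1)) * α₂₁ + (α₄ - 1) * α₂₁ := by ring
    rw [e2, e3] at h2'
    omega
  -- window coefficient
  have key : ∀ E : ℕ, ((∑ m ∈ range L, (X : Polynomial ℤ) ^ m) * X ^ E).coeff n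
      = if E ≤ n ∧ n < E + L then 1 else 0 := by
    intro E
    rw [Finset.sum_mul]
    simp_rw [← pow_add]
    rw [finset_sum_coeff]
    simp_rw [coeff_X_pow]
    split_ifs with h
    · rw [Finset.sum_eq_single (n - E)]
      · rw [if_pos (by omega)]
      · intro b _ hb; rw [if_neg (by omega)]
      · intro hn; simp [Finset.mem_range] at hn; omega
    · apply Finset.sum_eq_zero; intro m hm
      rw [if_neg]; simp [Finset.mem_range] at hm; omega
  -- rewrite the product
  rw [Finset.mul_sum]
  simp_rw [Finset.mul_sum, hexp]
  rw [finset_sum_coeff]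
  simp_rw [finset_sum_coeff, key]
  -- convert to a cardinality
  rw [← Finset.sum_sigma
    (Icc 1 (α₄ - 1)) (fun i => Ico (s (i - 1)) (s i))
    (fun p => if e p.1 p.2 ≤ n ∧ n < e p.1 p.2 + L then (1 : ℤ) else 0)]
  rw [Finset.sum_boole]
  rw [show (1 : ℤ) = ((1 : ℕ) : ℤ) from rfl, Nat.cast_le]
  apply Finset.card_le_one.mpr
  intro a ha b hb
  simp only [Finset.mem_filter, Finset.mem_sigma, Finset.mem_Icc, Finset.mem_Ico] at ha hb
  obtain ⟨⟨⟨hi1, hi2⟩, hj1, hj2⟩, hea, hna⟩ := ha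
  obtain ⟨⟨⟨hi1', hi2'⟩, hj1', hj2'⟩, heb, hnb⟩ := hb
  -- show a = b
  by_contra hne
  -- WLOG via lex order
  have main : ∀ (i j i' j' : ℕ), 1 ≤ i → i ≤ α₄ - 1 → s (i - 1) ≤ j → j < s i →
      1 ≤ i' → i' ≤ α₄ - 1 → s (i' - 1) ≤ j' → j' < s i' →
      e i j ≤ n → n < e i j + L → e i' j' ≤ n → n < e i' j' + L →
      (i < i' ∨ (i = i' ∧ j < j')) → False := by
    intro i j i' j' hi1 hi2 hj1 hj2 hi1' hi2' hj1' hj2' hea hna heb hnb hcase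
    have hjj : j + 1 ≤ j' := by
      rcases hcase with h | ⟨h, h'⟩
      · have : s i ≤ s (i' - 1) := smono i (i' - 1) (by omega) (by omega)
        omega
      · omega
    have hii : i ≤ i' := by omega
    have := gap i i' j j' hii hjj
    omega
  obtain ⟨i, j⟩ := a
  obtain ⟨i', j'⟩ := b
  rcases lt_trichotomy i i' with h | h | h
  · exact main i j i' j' hi1 hi2 hj1 hj2 hi1' hi2' hj1' hj2' hea hna heb hnb (Or.inl h)
  · rcases lt_trichotomy j j' with h' | h' | h'
    · exact main i j i' j' hi1 hi2 hj1 hj2 hi1' hi2' hj1' hj2' hea hna heb hnb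
        (Or.inr ⟨h, h'⟩)
    · exact hne (by simp [h, h'])
    · exact main i' j' i j hi1' hi2' hj1' hj2' hi1 hi2 hj1 hj2 heb hnb hea hna
        (Or.inr ⟨h.symm, h'⟩)
  · exact main i' j' i j hi1' hi2' hj1' hj2' hi1 hi2 hj1 hj2 heb hnb hea hna (Or.inl h)
end

section
/- Let Y(t) = (∑_{m=0}^{α₂₁−1} t^m)·(∑_{j=0}^{α₄−2} t^{((α₄−1)s_j+j)α₂+α₄−j}). If α₂ > α₂₁ + 1 and s₀ ≤ s₁ ≤ … ≤ s_{α₄−2}, then every coefficient of Y(t) is at most 1. (The reason is that the exponents ((α₄−1)s_j+j)α₂+α₄−j of consecutive terms differ by at least α₂ − 1 > α₂₁ − 1.) -/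
open Polynomial Finset

/-- if `α₂ > α₂₁ + 1` and `s₀ ≤ s₁ ≤ … ≤ s_{α₄−2}`, then every
coefficient of `Y(t) = (∑_{m=0}^{α₂₁−1} t^m)·(∑_{j=0}^{α₄−2}
t^{((α₄−1)s_j+j)α₂+α₄−j})` is at most `1`. -/
theorem Y_coeff_le_one (α₁ α₂ α₃ α₄ α₂₁ : ℕ)
    (h21 : 1 ≤ α₂₁) (h2 : 2 ≤ α₂) (h4 : 2 ≤ α₄)
    (s : ℕ → ℕ)
    (h221 : α₂₁ + 1 < α₂)
    (hs : ∀ j : ℕ, j + 1 ≤ α₄ - 2 → s j ≤ s (j + 1)) :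
    ∀ n : ℕ,
      ((∑ m ∈ range α₂₁, (X : Polynomial ℤ) ^ m) *
        (∑ j ∈ range (α₄ - 1),
          (X : Polynomial ℤ) ^ (((α₄ - 1) * s j + j) * α₂ + (α₄ - j)))).coeff n
        ≤ 1 := by
  intro n
  set e : ℕ → ℕ := fun j => ((α₄ - 1) * s j + j) * α₂ + (α₄ - j) with he
  -- one-step gap
  have hstep : ∀ j, j + 1 ≤ α₄ - 2 → e j + α₂₁ + 1 ≤ e (j + 1) := by
    intro j hj
    have hsj : s j ≤ s (j + 1) := hs j hj
    have hmul : ((α₄ - 1) * s j + j) * α₂ + α₂ ≤ ((α₄ - 1) * s (j + 1) + (j + 1)) * α₂ := by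
      have : (α₄ - 1) * s j + j + 1 ≤ (α₄ - 1) * s (j + 1) + (j + 1) := by
        have := Nat.mul_le_mul_left (α₄ - 1) hsj
        omega
      calc ((α₄ - 1) * s j + j) * α₂ + α₂ = ((α₄ - 1) * s j + j + 1) * α₂ := by ring
        _ ≤ ((α₄ - 1) * s (j + 1) + (j + 1)) * α₂ := Nat.mul_le_mul_right α₂ this
    simp only [he]
    omega
  -- multi-step gap
  have hgap : ∀ j j', j < j' → j' ≤ α₄ - 2 → e j + α₂₁ + 1 ≤ e j' := by
    intro j j' hlt hle
    induction j' with
    | zero => omega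
    | succ k ih =>
      rcases Nat.lt_or_ge j k with h | h
      · have := ih h (by omega)
        have := hstep k (by omega)
        omega
      · have : j = k := by omega
        subst this
        exact hstep j hle
  -- injectivity of (m, j) ↦ m + e j
  have key : ∀ m j m' j', m < α₂₁ → j < α₄ - 1 → m' < α₂₁ → j' < α₄ - 1 →
      m + e j = m' + e j' → m = m' ∧ j = j' := by
    intro m j m' j' hm hj hm' hj' heq
    have hjj : j = j' := by
      by_contra hne
      rcases Nat.lt_or_ge j j' with h | h
      · have := hgap j j' h (by omega); omega
      · have := hgap j' j (by omega) (by omega); omega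
    subst hjj
    exact ⟨by omega, rfl⟩
  rw [Finset.sum_mul_sum]
  simp only [← pow_add, Polynomial.finset_sum_coeff, Polynomial.coeff_X_pow]
  rw [← Finset.sum_product']
  rw [Finset.sum_boole]
  have hcard : ((range α₂₁ ×ˢ range (α₄ - 1)).filter
      (fun p : ℕ × ℕ => n = p.1 + e p.2)).card ≤ 1 := by
    apply Finset.card_le_one.2
    intro a ha b hb
    simp only [Finset.mem_filter, Finset.mem_product, Finset.mem_range] at ha hb
    obtain ⟨⟨ha1, ha2⟩, ha3⟩ := ha
    obtain ⟨⟨hb1, hb2⟩, hb3⟩ := hb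
    have := key a.1 a.2 b.1 b.2 ha1 ha2 hb1 hb2 (by omega)
    exact Prod.ext this.1 this.2
  exact_mod_cast hcard
end

section
/- Suppose s ≥ 1 is the smallest natural number satisfying ((α₄−1)s+α₄−1)α₂ + 1 < sα₁ + ((α₄−1)s+α₄)α₂₁ + α₃ − s (the defining inequality of s_{α₄−1}). Then (α₄−1)sα₂ + 1 ≥ (s−1)(α₁−1) + ((α₄−1)(s−1)+α₄)α₂₁ + α₃, and consequently (α₄−1)(s+1)α₂ ≥ (s−1)α₁ + ((α₄−1)(s−1)+α₄)α₂₁ + α₃ − (s−1) + (α₄−1)α₂ − 1. (Hence the largest exponent occurring among the positive terms of the second Hilbert series is at least the largest exponent occurring among its negative terms.) -/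
/-- The defining inequality of the parameter `s_{α₄−1}`. -/
def SIneq (α₁ α₂ α₃ α₄ α₂₁ s : ℕ) : Prop :=
  ((α₄ - 1) * s + (α₄ - 1)) * α₂ + 1 <
    s * α₁ + ((α₄ - 1) * s + α₄) * α₂₁ + α₃ - s

/-- if `s ≥ 1` is the smallest natural number satisfying the
defining inequality of `s_{α₄−1}`, then
`(α₄−1)sα₂ + 1 ≥ (s−1)(α₁−1) + ((α₄−1)(s−1)+α₄)α₂₁ + α₃` and consequently
`(α₄−1)(s+1)α₂ ≥ (s−1)α₁ + ((α₄−1)(s−1)+α₄)α₂₁ + α₃ − (s−1) + (α₄−1)α₂ − 1`. -/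
theorem largest_exponent_bound (α₁ α₂ α₃ α₄ α₂₁ s : ℕ)
    (h1 : 2 ≤ α₁) (h2 : 2 ≤ α₂) (h3 : 2 ≤ α₃) (h4 : 2 ≤ α₄)
    (h21 : 1 ≤ α₂₁) (h21' : α₂₁ ≤ α₁ - 2)
    (hs1 : 1 ≤ s)
    (hleast : IsLeast {m : ℕ | SIneq α₁ α₂ α₃ α₄ α₂₁ m} s) :
    (s - 1) * (α₁ - 1) + ((α₄ - 1) * (s - 1) + α₄) * α₂₁ + α₃ ≤
      (α₄ - 1) * s * α₂ + 1 ∧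
    (s - 1) * α₁ + ((α₄ - 1) * (s - 1) + α₄) * α₂₁ + α₃ - (s - 1)
        + (α₄ - 1) * α₂ - 1 ≤
      (α₄ - 1) * (s + 1) * α₂ := by
  obtain ⟨t, rfl⟩ : ∃ t, s = t + 1 := ⟨s - 1, by omega⟩
  have hns : ¬ SIneq α₁ α₂ α₃ α₄ α₂₁ t := fun h => by
    have := hleast.2 h; omega
  unfold SIneq at hns
  push_neg at hns
  simp only [Nat.add_sub_cancel]
  have hC : ((α₄ - 1) * t + (α₄ - 1)) * α₂ = (α₄ - 1) * (t + 1) * α₂ := by ring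
  rw [hC] at hns
  have hmul : t * (α₁ - 1) = t * α₁ - t := by
    rw [Nat.mul_sub, mul_one]
  have hle : t ≤ t * α₁ := Nat.le_mul_of_pos_right t (by omega)
  have hC2 : (α₄ - 1) * (t + 1 + 1) * α₂ = (α₄ - 1) * (t + 1) * α₂ + (α₄ - 1) * α₂ := by
    ring
  rw [hmul, hC2]
  generalize t * α₁ = A at *
  generalize ((α₄ - 1) * t + α₄) * α₂₁ = B at *
  generalize (α₄ - 1) * (t + 1) * α₂ = C at *
  generalize (α₄ - 1) * α₂ = D at *
  omega
end
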